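/- For every integer ℓ ≥ 1, all θ, θ' ∈ ℂ^{2ℓ+1} and every probability measure g on [0,1], the Hellinger distance between the two Gaussian mixtures with the same mixing law satisfies d_H(p_{θ,g}, p_{θ',g}) ≤ 2^{1/4} ‖θ − θ'‖^{1/2}. (Paper's Proposition 3.6.) -/

import Mathlib

open MeasureTheory Measure

noncomputable section

/-- The index set `{-ℓ, …, ℓ}` of Fourier frequencies. -/
abbrev Idx (ℓ : ℕ) := {k : ℤ // k ∈ Finset.Icc (-(ℓ : ℤ)) (ℓ : ℤ)}

/-- The standard complex Gaussian density `γ(z) = π^{-(2ℓ+1)} exp(-‖z‖²)` on `ℂ^{2ℓ+1}`. -/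
def gaussDensity (ℓ : ℕ) (z : Idx ℓ → ℂ) : ℝ :=
  Real.pi ^ (-(2 * (ℓ : ℤ) + 1)) * Real.exp (-(∑ k, ‖z k‖ ^ 2))

/-- The shifted vector `(θ • φ)ₖ = θₖ e^{-2πikφ}`. -/
def bulletF (ℓ : ℕ) (θ : Idx ℓ → ℂ) (φ : ℝ) : Idx ℓ → ℂ :=
  fun k => θ k * Complex.exp (-(2 * Real.pi * ((k : ℤ) : ℝ) * φ : ℝ) * Complex.I)

/-- The mixture density `p_{θ,g}(z) = ∫₀¹ γ(z - θ•φ) dg(φ)`, for a mixing measure `g`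
(a measure on `ℝ` thought of as carried by `[0,1]`). -/
def mixDensity (ℓ : ℕ) (θ : Idx ℓ → ℂ) (g : Measure ℝ) (z : Idx ℓ → ℂ) : ℝ :=
  ∫ φ, gaussDensity ℓ (fun k => z k - bulletF ℓ θ φ k) ∂g

/-- Total variation distance between densities on `ℂ^{2ℓ+1}`. -/
def dTVd (ℓ : ℕ) (q₁ q₂ : (Idx ℓ → ℂ) → ℝ) : ℝ :=
  (1 / 2) * ∫ z, |q₁ z - q₂ z|

/-- Hellinger distance between densities on `ℂ^{2ℓ+1}`. -/
def dHd (ℓ : ℕ) (q₁ q₂ : (Idx ℓ → ℂ) → ℝ) : ℝ :=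
  Real.sqrt (∫ z, (Real.sqrt (q₁ z) - Real.sqrt (q₂ z)) ^ 2)

/-- `‖θ‖ = (Σₖ |θₖ|²)^{1/2}`. -/
def thetaNorm (ℓ : ℕ) (θ : Idx ℓ → ℂ) : ℝ :=
  Real.sqrt (∑ k, ‖θ k‖ ^ 2)

/-- `‖θ‖_{H¹} = (Σₖ k²|θₖ|²)^{1/2}`. -/
def thetaH1 (ℓ : ℕ) (θ : Idx ℓ → ℂ) : ℝ :=
  Real.sqrt (∑ k : Idx ℓ, ((k : ℤ) : ℝ) ^ 2 * ‖θ k‖ ^ 2)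

/-- A probability measure on `[0,1]`, modelled as a probability measure on `ℝ`
giving no mass to the complement of `[0,1]`. -/
def IsProbOn01 (g : Measure ℝ) : Prop :=
  IsProbabilityMeasure g ∧ g (Set.Icc (0 : ℝ) 1)ᶜ = 0


-- 1-D complex gaussian
lemma integrable_gauss1 (c : ℂ) :
    Integrable (fun z : ℂ => Real.exp (-‖z - c‖ ^ 2)) := by
  have h := Complex.volume_preserving_equiv_real_prod
  have h2 : Integrable (fun p : ℝ × ℝ =>
      Real.exp (-(p.1 - c.re) ^ 2) * Real.exp (-(p.2 - c.im) ^ 2)) := by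
    have h1 : Integrable (fun x : ℝ => Real.exp (-(x - c.re) ^ 2)) := by
      simpa using (integrable_exp_neg_mul_sq one_pos).comp_sub_right c.re
    have h1' : Integrable (fun x : ℝ => Real.exp (-(x - c.im) ^ 2)) := by
      simpa using (integrable_exp_neg_mul_sq one_pos).comp_sub_right c.im
    exact h1.mul_prod h1'
  have := (h.integrable_comp_emb Complex.measurableEquivRealProd.measurableEmbedding).mpr h2
  refine this.congr (Filter.Eventually.of_forall fun z => ?_)
  simp only [Function.comp, Complex.measurableEquivRealProd]
  rw [← Real.exp_add, ← neg_add]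
  congr 2
  rw [Complex.sq_norm, Complex.normSq_apply]
  simp [Complex.sub_re, Complex.sub_im]
  ring

lemma integral_gauss1 (c : ℂ) :
    ∫ z : ℂ, Real.exp (-‖z - c‖ ^ 2) = Real.pi := by
  have h := Complex.volume_preserving_equiv_real_prod
  have key : ∀ z : ℂ, Real.exp (-‖z - c‖ ^ 2)
      = Real.exp (-((Complex.measurableEquivRealProd z).1 - c.re) ^ 2)
        * Real.exp (-((Complex.measurableEquivRealProd z).2 - c.im) ^ 2) := by
    intro z
    simp only [Complex.measurableEquivRealProd]
    rw [← Real.exp_add, ← neg_add]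
    congr 2
    rw [Complex.sq_norm, Complex.normSq_apply]
    simp [Complex.sub_re, Complex.sub_im]
    ring
  simp_rw [key]
  rw [h.integral_comp Complex.measurableEquivRealProd.measurableEmbedding
    (fun p : ℝ × ℝ => Real.exp (-(p.1 - c.re) ^ 2) * Real.exp (-(p.2 - c.im) ^ 2))]
  rw [volume_eq_prod]
  rw [MeasureTheory.integral_prod_mul (fun x : ℝ => Real.exp (-(x - c.re) ^ 2))
    (fun x : ℝ => Real.exp (-(x - c.im) ^ 2))]
  have g1 : ∀ a : ℝ, ∫ x : ℝ, Real.exp (-(x - a) ^ 2) = Real.sqrt Real.pi := by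
    intro a
    rw [integral_sub_right_eq_self (fun x : ℝ => Real.exp (-x ^ 2)) a]
    simpa using integral_gaussian 1
  rw [g1, g1]
  exact Real.mul_self_sqrt Real.pi_nonneg

lemma card_Idx (ℓ : ℕ) : Fintype.card (Idx ℓ) = 2 * ℓ + 1 := by
  rw [Fintype.card_coe, Int.card_Icc]
  omega

lemma gauss_eq_prod (ℓ : ℕ) (z : Idx ℓ → ℂ) :
    gaussDensity ℓ z = ∏ k, (Real.pi⁻¹ * Real.exp (-‖z k‖ ^ 2)) := by
  rw [Finset.prod_mul_distrib, Finset.prod_const, ← Real.exp_sum, gaussDensity]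
  have : ∑ k, -‖z k‖ ^ 2 = -(∑ k, ‖z k‖ ^ 2) := by
    rw [Finset.sum_neg_distrib]
  rw [this]
  congr 1
  rw [Finset.card_univ, card_Idx]
  rw [show (-(2 * (ℓ : ℤ) + 1)) = -((2 * ℓ + 1 : ℕ) : ℤ) by push_cast; ring]
  rw [zpow_neg, zpow_natCast, ← inv_pow]

lemma integrable_gaussPi (ℓ : ℕ) (m : Idx ℓ → ℂ) :
    Integrable (fun z : Idx ℓ → ℂ => gaussDensity ℓ (fun k => z k - m k)) := by
  simp_rw [gauss_eq_prod]
  exact Integrable.fintype_prod (f := fun k (w : ℂ) => Real.pi⁻¹ * Real.exp (-‖w - m k‖ ^ 2))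
    (fun k => (integrable_gauss1 (m k)).const_mul _)

lemma integral_gaussPi (ℓ : ℕ) (m : Idx ℓ → ℂ) :
    ∫ z : Idx ℓ → ℂ, gaussDensity ℓ (fun k => z k - m k) = 1 := by
  simp_rw [gauss_eq_prod]
  rw [MeasureTheory.integral_fintype_prod_volume_eq_prod (f := fun k (w : ℂ) => Real.pi⁻¹ * Real.exp (-‖w - m k‖ ^ 2))]
  have : ∀ k : Idx ℓ, ∫ w : ℂ, Real.pi⁻¹ * Real.exp (-‖w - m k‖ ^ 2) = 1 := by
    intro k
    rw [MeasureTheory.integral_const_mul, integral_gauss1]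
    exact inv_mul_cancel₀ Real.pi_ne_zero
  simp [this]

lemma abs_parallelogram (w u v : ℂ) :
    ‖w - u‖ ^ 2 + ‖w - v‖ ^ 2
      = 2 * ‖w - (u + v) / 2‖ ^ 2 + ‖u - v‖ ^ 2 / 2 := by
  have h := parallelogram_law_with_norm ℝ (w - (u + v) / 2) ((v - u) / 2)
  have e1 : w - (u + v) / 2 + (v - u) / 2 = w - u := by ring
  have e2 : w - (u + v) / 2 - (v - u) / 2 = w - v := by ring
  rw [e1, e2] at h
  have hz : ‖(v - u) / 2‖ ^ 2 = ‖u - v‖ ^ 2 / 4 := by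
    rw [show v - u = -(u - v) by ring, norm_div, norm_neg]
    have : ‖(2 : ℂ)‖ = 2 := by simp
    rw [this]; ring
  rw [hz] at h
  linarith

lemma gauss_affinity (ℓ : ℕ) (m m' : Idx ℓ → ℂ) (z : Idx ℓ → ℂ) :
    Real.sqrt (gaussDensity ℓ (fun k => z k - m k) * gaussDensity ℓ (fun k => z k - m' k))
      = Real.exp (-(∑ k, ‖m k - m' k‖ ^ 2) / 4)
        * gaussDensity ℓ (fun k => z k - (m k + m' k) / 2) := by
  have hsum : (∑ k, ‖z k - m k‖ ^ 2) + (∑ k, ‖z k - m' k‖ ^ 2)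
      = 2 * (∑ k, ‖z k - (m k + m' k) / 2‖ ^ 2)
        + (∑ k, ‖m k - m' k‖ ^ 2) / 2 := by
    rw [← Finset.sum_add_distrib, Finset.mul_sum, Finset.sum_div, ← Finset.sum_add_distrib]
    exact Finset.sum_congr rfl fun k _ => abs_parallelogram (z k) (m k) (m' k)
  unfold gaussDensity
  set P : ℝ := Real.pi ^ (-(2 * (ℓ : ℤ) + 1)) with hP
  have hPpos : 0 < P := zpow_pos Real.pi_pos _
  set A := ∑ k, ‖z k - m k‖ ^ 2
  set B := ∑ k, ‖z k - m' k‖ ^ 2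
  set C := ∑ k, ‖z k - (m k + m' k) / 2‖ ^ 2
  set S := ∑ k, ‖m k - m' k‖ ^ 2
  have hE : Real.exp (-A) * Real.exp (-B) = Real.exp (-S / 4) ^ 2 * Real.exp (-C) ^ 2 := by
    rw [← Real.exp_add, sq, sq, ← Real.exp_add, ← Real.exp_add, ← Real.exp_add]
    congr 1
    linarith
  have : P * Real.exp (-A) * (P * Real.exp (-B))
      = (Real.exp (-S / 4) * (P * Real.exp (-C))) ^ 2 := by
    calc P * Real.exp (-A) * (P * Real.exp (-B))
        = P ^ 2 * (Real.exp (-A) * Real.exp (-B)) := by ring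
      _ = P ^ 2 * (Real.exp (-S / 4) ^ 2 * Real.exp (-C) ^ 2) := by rw [hE]
      _ = (Real.exp (-S / 4) * (P * Real.exp (-C))) ^ 2 := by ring
  rw [this, Real.sqrt_sq]
  positivity


lemma abs_bullet_sub (ℓ : ℕ) (θ θ' : Idx ℓ → ℂ) (φ : ℝ) (k : Idx ℓ) :
    ‖bulletF ℓ θ φ k - bulletF ℓ θ' φ k‖ = ‖θ k - θ' k‖ := by
  unfold bulletF
  rw [← sub_mul, norm_mul, Complex.norm_exp]
  simp

lemma continuous_gauss (ℓ : ℕ) : Continuous (gaussDensity ℓ) := by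
  unfold gaussDensity
  refine continuous_const.mul (Real.continuous_exp.comp (continuous_neg.comp ?_))
  exact continuous_finset_sum _ fun k _ =>
    (continuous_norm.comp (continuous_apply k)).pow 2

lemma continuous_kernel (ℓ : ℕ) (θ : Idx ℓ → ℂ) :
    Continuous (fun p : (Idx ℓ → ℂ) × ℝ =>
      gaussDensity ℓ (fun k => p.1 k - bulletF ℓ θ p.2 k)) := by
  have hb : ∀ k : Idx ℓ, Continuous (fun φ : ℝ => bulletF ℓ θ φ k) := by
    intro k
    unfold bulletF
    fun_prop
  have h1 : Continuous (fun p : (Idx ℓ → ℂ) × ℝ =>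
      (fun k => p.1 k - bulletF ℓ θ p.2 k : Idx ℓ → ℂ)) :=
    continuous_pi fun k => ((continuous_apply k).comp continuous_fst).sub
      ((hb k).comp continuous_snd)
  exact (continuous_gauss ℓ).comp h1


lemma gauss_nonneg (ℓ : ℕ) (w : Idx ℓ → ℂ) : 0 ≤ gaussDensity ℓ w := by
  unfold gaussDensity; positivity

lemma gauss_le (ℓ : ℕ) (w : Idx ℓ → ℂ) :
    gaussDensity ℓ w ≤ Real.pi ^ (-(2 * (ℓ : ℤ) + 1)) := by
  unfold gaussDensity
  have h1 : Real.exp (-(∑ k, ‖w k‖ ^ 2)) ≤ 1 := by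
    rw [Real.exp_le_one_iff]
    simp only [neg_nonpos]
    positivity
  calc Real.pi ^ (-(2 * (ℓ : ℤ) + 1)) * Real.exp (-(∑ k, ‖w k‖ ^ 2))
      ≤ Real.pi ^ (-(2 * (ℓ : ℤ) + 1)) * 1 := by
        apply mul_le_mul_of_nonneg_left h1 (le_of_lt (zpow_pos Real.pi_pos _))
    _ = _ := mul_one _

section Main

variable {ℓ : ℕ} (θ θ' : Idx ℓ → ℂ) (g : Measure ℝ) [IsProbabilityMeasure g]

/-- kernel -/
abbrev ker (ℓ : ℕ) (θ : Idx ℓ → ℂ) (z : Idx ℓ → ℂ) (φ : ℝ) : ℝ :=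
  gaussDensity ℓ (fun k => z k - bulletF ℓ θ φ k)

lemma integrable_ker_g (z : Idx ℓ → ℂ) : Integrable (fun φ => ker ℓ θ z φ) g := by
  refine Integrable.mono' (integrable_const (Real.pi ^ (-(2 * (ℓ : ℤ) + 1)))) ?_ ?_
  · exact (((continuous_kernel ℓ θ).comp (Continuous.prodMk_right z)).aestronglyMeasurable)
  · refine Filter.Eventually.of_forall fun φ => ?_
    rw [Real.norm_eq_abs, abs_of_nonneg (gauss_nonneg _ _)]
    exact gauss_le _ _

lemma mix_nonneg (z : Idx ℓ → ℂ) : 0 ≤ mixDensity ℓ θ g z :=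
  integral_nonneg fun φ => gauss_nonneg _ _

lemma ofReal_mix (z : Idx ℓ → ℂ) :
    ENNReal.ofReal (mixDensity ℓ θ g z) = ∫⁻ φ, ENNReal.ofReal (ker ℓ θ z φ) ∂g :=
  ofReal_integral_eq_lintegral_ofReal (integrable_ker_g θ g z)
    (Filter.Eventually.of_forall fun φ => gauss_nonneg _ _)

lemma sm_mix : StronglyMeasurable (mixDensity ℓ θ g) :=
  (continuous_kernel ℓ θ).stronglyMeasurable.integral_prod_right'

lemma lintegral_ker_z (φ : ℝ) :
    ∫⁻ z : Idx ℓ → ℂ, ENNReal.ofReal (ker ℓ θ z φ) = 1 := by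
  have := ofReal_integral_eq_lintegral_ofReal (integrable_gaussPi ℓ (bulletF ℓ θ φ))
    (Filter.Eventually.of_forall fun z => gauss_nonneg _ _)
  rw [integral_gaussPi] at this
  rw [← this, ENNReal.ofReal_one]

lemma lintegral_mix : ∫⁻ z : Idx ℓ → ℂ, ENNReal.ofReal (mixDensity ℓ θ g z) = 1 := by
  simp_rw [ofReal_mix θ g]
  rw [lintegral_lintegral_swap]
  · simp_rw [lintegral_ker_z θ]
    simp
  · exact ((continuous_kernel ℓ θ).measurable.ennreal_ofReal).aemeasurable

lemma integrable_mix : Integrable (mixDensity ℓ θ g) := by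
  refine ⟨(sm_mix θ g).aestronglyMeasurable, ?_⟩
  rw [hasFiniteIntegral_iff_ofReal (Filter.Eventually.of_forall fun z => mix_nonneg θ g z)]
  rw [lintegral_mix θ g]
  exact ENNReal.one_lt_top

lemma integral_mix : ∫ z, mixDensity ℓ θ g z = 1 := by
  rw [integral_eq_lintegral_of_nonneg_ae (Filter.Eventually.of_forall fun z => mix_nonneg θ g z)
    (sm_mix θ g).aestronglyMeasurable, lintegral_mix θ g]
  simp

end Main

section Main2

variable {ℓ : ℕ} (θ θ' : Idx ℓ → ℂ) (g : Measure ℝ) [IsProbabilityMeasure g]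

lemma lintegral_gaussPi' (m : Idx ℓ → ℂ) :
    ∫⁻ z : Idx ℓ → ℂ, ENNReal.ofReal (gaussDensity ℓ (fun k => z k - m k)) = 1 := by
  have := ofReal_integral_eq_lintegral_ofReal (integrable_gaussPi ℓ m)
    (Filter.Eventually.of_forall fun z => gauss_nonneg _ _)
  rw [integral_gaussPi] at this
  rw [← this, ENNReal.ofReal_one]

set_option maxHeartbeats 1000000 in
lemma continuous_ker_phi (z : Idx ℓ → ℂ) : Continuous (fun φ => ker ℓ θ z φ) := by
  have h := (continuous_kernel ℓ θ).comp (Continuous.prodMk_right z)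
  exact h

lemma psi_le (z : Idx ℓ → ℂ) :
    ∫⁻ φ, ENNReal.ofReal (Real.sqrt (ker ℓ θ z φ * ker ℓ θ' z φ)) ∂g
      ≤ ENNReal.ofReal (Real.sqrt (mixDensity ℓ θ g z * mixDensity ℓ θ' g z)) := by
  have h22 : Real.HolderConjugate 2 2 := ⟨by norm_num, by norm_num, by norm_num⟩
  have hf : AEMeasurable (fun φ => ENNReal.ofReal (Real.sqrt (ker ℓ θ z φ))) g :=
    ((Real.continuous_sqrt.comp (continuous_ker_phi θ z)).measurable.ennreal_ofReal).aemeasurable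
  have hf' : AEMeasurable (fun φ => ENNReal.ofReal (Real.sqrt (ker ℓ θ' z φ))) g :=
    ((Real.continuous_sqrt.comp (continuous_ker_phi θ' z)).measurable.ennreal_ofReal).aemeasurable
  have key := ENNReal.lintegral_mul_le_Lp_mul_Lq g h22 hf hf'
  have e1 : ∀ φ, ENNReal.ofReal (Real.sqrt (ker ℓ θ z φ * ker ℓ θ' z φ))
      = ((fun φ => ENNReal.ofReal (Real.sqrt (ker ℓ θ z φ))) *
         (fun φ => ENNReal.ofReal (Real.sqrt (ker ℓ θ' z φ)))) φ := by
    intro φ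
    simp only [Pi.mul_apply]
    rw [Real.sqrt_mul (gauss_nonneg _ _), ENNReal.ofReal_mul (Real.sqrt_nonneg _)]
  have e2 : ∀ (τ : Idx ℓ → ℂ), ∫⁻ φ, ENNReal.ofReal (Real.sqrt (ker ℓ τ z φ)) ^ (2 : ℝ) ∂g
      = ENNReal.ofReal (mixDensity ℓ τ g z) := by
    intro τ
    have : ∀ φ, ENNReal.ofReal (Real.sqrt (ker ℓ τ z φ)) ^ (2 : ℝ)
        = ENNReal.ofReal (ker ℓ τ z φ) := by
      intro φ
      rw [ENNReal.ofReal_rpow_of_nonneg (Real.sqrt_nonneg _) (by norm_num)]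
      rw [Real.rpow_two, Real.sq_sqrt (gauss_nonneg _ _)]
    simp_rw [this]
    exact (ofReal_mix τ g z).symm
  simp_rw [e1]
  refine key.trans ?_
  rw [e2 θ, e2 θ']
  have e3 : ∀ (τ : Idx ℓ → ℂ), ENNReal.ofReal (mixDensity ℓ τ g z) ^ ((1:ℝ)/2)
      = ENNReal.ofReal (Real.sqrt (mixDensity ℓ τ g z)) := by
    intro τ
    rw [ENNReal.ofReal_rpow_of_nonneg (mix_nonneg τ g z) (by norm_num)]
    rw [← Real.sqrt_eq_rpow]
  rw [e3 θ, e3 θ', ← ENNReal.ofReal_mul (Real.sqrt_nonneg _),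
    ← Real.sqrt_mul (mix_nonneg θ g z)]

lemma lintegral_sqKer (φ : ℝ) :
    ∫⁻ z : Idx ℓ → ℂ, ENNReal.ofReal (Real.sqrt (ker ℓ θ z φ * ker ℓ θ' z φ))
      = ENNReal.ofReal (Real.exp (-(∑ k, ‖θ k - θ' k‖ ^ 2) / 4)) := by
  have hS : (∑ k, ‖bulletF ℓ θ φ k - bulletF ℓ θ' φ k‖ ^ 2)
      = ∑ k, ‖θ k - θ' k‖ ^ 2 :=
    Finset.sum_congr rfl fun k _ => by rw [abs_bullet_sub]
  have key : ∀ z : Idx ℓ → ℂ, Real.sqrt (ker ℓ θ z φ * ker ℓ θ' z φ)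
      = Real.exp (-(∑ k, ‖θ k - θ' k‖ ^ 2) / 4)
        * gaussDensity ℓ (fun k => z k - (bulletF ℓ θ φ k + bulletF ℓ θ' φ k) / 2) := by
    intro z
    rw [gauss_affinity ℓ (bulletF ℓ θ φ) (bulletF ℓ θ' φ) z, hS]
  simp_rw [key]
  simp_rw [ENNReal.ofReal_mul (le_of_lt (Real.exp_pos _))]
  have hm : Measurable (fun z : Idx ℓ → ℂ =>
      ENNReal.ofReal (gaussDensity ℓ fun k => z k - (bulletF ℓ θ φ k + bulletF ℓ θ' φ k) / 2)) := by
    apply Measurable.ennreal_ofReal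
    exact ((continuous_gauss ℓ).comp
      (continuous_pi fun k => (continuous_apply k).sub continuous_const)).measurable
  rw [lintegral_const_mul _ hm]
  rw [lintegral_gaussPi' (fun k => (bulletF ℓ θ φ k + bulletF ℓ θ' φ k) / 2), mul_one]

lemma lintegral_psi :
    ∫⁻ z : Idx ℓ → ℂ, ∫⁻ φ, ENNReal.ofReal (Real.sqrt (ker ℓ θ z φ * ker ℓ θ' z φ)) ∂g
      = ENNReal.ofReal (Real.exp (-(∑ k, ‖θ k - θ' k‖ ^ 2) / 4)) := by
  rw [lintegral_lintegral_swap]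
  · simp_rw [lintegral_sqKer θ θ']
    simp
  · refine (Measurable.ennreal_ofReal ?_).aemeasurable
    refine (Real.continuous_sqrt.comp ?_).measurable
    exact (continuous_kernel ℓ θ).mul (continuous_kernel ℓ θ')

end Main2


lemma sqrt_mul_le {a b : ℝ} (ha : 0 ≤ a) (hb : 0 ≤ b) :
    Real.sqrt (a * b) ≤ (a + b) / 2 := by
  rw [Real.sqrt_mul ha]
  nlinarith [Real.sq_sqrt ha, Real.sq_sqrt hb, sq_nonneg (Real.sqrt a - Real.sqrt b)]


/-- **Proposition 3.6 of the paper.** For any `θ, θ' ∈ ℂ^{2ℓ+1}` and any probability measure `g`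
on `[0,1]`, the Hellinger distance between the two Gaussian mixtures with the same mixing law
satisfies `d_H(p_{θ,g}, p_{θ',g}) ≤ 2^{1/4} ‖θ - θ'‖^{1/2}`. -/
theorem hellinger_mixture_le (ℓ : ℕ) (hℓ : 1 ≤ ℓ) (θ θ' : Idx ℓ → ℂ)
    (g : Measure ℝ) (hg : IsProbOn01 g) :
    dHd ℓ (mixDensity ℓ θ g) (mixDensity ℓ θ' g)
      ≤ (2 : ℝ) ^ ((1 : ℝ) / 4) * Real.sqrt (thetaNorm ℓ (fun k => θ k - θ' k)) := by
  haveI : IsProbabilityMeasure g := hg.1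
  set q1 := mixDensity ℓ θ g with hq1
  set q2 := mixDensity ℓ θ' g with hq2
  set D2 := ∑ k, ‖θ k - θ' k‖ ^ 2 with hD2
  set D := Real.sqrt D2 with hD
  have hD2nn : 0 ≤ D2 := Finset.sum_nonneg fun k _ => sq_nonneg _
  have hDnn : 0 ≤ D := Real.sqrt_nonneg _
  have hDsq : D ^ 2 = D2 := Real.sq_sqrt hD2nn
  set E := Real.exp (-D2 / 4) with hE
  -- the lower bound function h
  set ψ : (Idx ℓ → ℂ) → ENNReal := fun z =>
    ∫⁻ φ, ENNReal.ofReal (Real.sqrt (ker ℓ θ z φ * ker ℓ θ' z φ)) ∂g with hψ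
  set h : (Idx ℓ → ℂ) → ℝ := fun z => (ψ z).toReal with hh
  have hψne : ∀ z, ψ z ≠ ⊤ := fun z =>
    ((psi_le θ θ' g z).trans_lt ENNReal.ofReal_lt_top).ne
  have h_le : ∀ z, h z ≤ Real.sqrt (q1 z * q2 z) := fun z =>
    ENNReal.toReal_le_of_le_ofReal (Real.sqrt_nonneg _) (psi_le θ θ' g z)
  have h_nonneg : ∀ z, 0 ≤ h z := fun z => ENNReal.toReal_nonneg
  have hprod_meas : Measurable (fun p : (Idx ℓ → ℂ) × ℝ =>
      ENNReal.ofReal (Real.sqrt (ker ℓ θ p.1 p.2 * ker ℓ θ' p.1 p.2))) :=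
    (Real.continuous_sqrt.comp
      ((continuous_kernel ℓ θ).mul (continuous_kernel ℓ θ'))).measurable.ennreal_ofReal
  have h_meas : Measurable h := hprod_meas.lintegral_prod_right'.ennreal_toReal
  have sqrtq_meas : AEStronglyMeasurable (fun z => Real.sqrt (q1 z * q2 z)) volume :=
    (Real.continuous_sqrt.measurable.comp
      ((sm_mix θ g).measurable.mul (sm_mix θ' g).measurable)).aestronglyMeasurable
  have q12int : Integrable (fun z => (q1 z + q2 z) / 2) :=
    ((integrable_mix θ g).add (integrable_mix θ' g)).div_const 2
  have sqrt_int : Integrable (fun z => Real.sqrt (q1 z * q2 z)) := by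
    refine Integrable.mono' q12int sqrtq_meas (Filter.Eventually.of_forall fun z => ?_)
    rw [Real.norm_eq_abs, abs_of_nonneg (Real.sqrt_nonneg _)]
    exact sqrt_mul_le (mix_nonneg θ g z) (mix_nonneg θ' g z)
  have h_int : Integrable h := by
    refine Integrable.mono' sqrt_int h_meas.aestronglyMeasurable
      (Filter.Eventually.of_forall fun z => ?_)
    rw [Real.norm_eq_abs, abs_of_nonneg (h_nonneg z)]
    exact h_le z
  have int_h : ∫ z, h z = E := by
    rw [integral_eq_lintegral_of_nonneg_ae (Filter.Eventually.of_forall h_nonneg)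
      h_meas.aestronglyMeasurable]
    have : ∀ z, ENNReal.ofReal (h z) = ψ z := fun z => ENNReal.ofReal_toReal (hψne z)
    simp_rw [this]
    rw [hψ]
    rw [lintegral_psi θ θ' g]
    rw [ENNReal.toReal_ofReal (le_of_lt (Real.exp_pos _))]
  have affinity_ge : E ≤ ∫ z, Real.sqrt (q1 z * q2 z) := by
    rw [← int_h]
    exact integral_mono h_int sqrt_int h_le
  -- expansion of the squared Hellinger distance
  have expand : ∀ z, (Real.sqrt (q1 z) - Real.sqrt (q2 z)) ^ 2
      = (q1 z + q2 z) - 2 * Real.sqrt (q1 z * q2 z) := by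
    intro z
    rw [sub_sq, Real.sq_sqrt (mix_nonneg θ g z), Real.sq_sqrt (mix_nonneg θ' g z),
      Real.sqrt_mul (mix_nonneg θ g z)]
    ring
  have int_S : ∫ z, (Real.sqrt (q1 z) - Real.sqrt (q2 z)) ^ 2
      = 2 - 2 * ∫ z, Real.sqrt (q1 z * q2 z) := by
    simp_rw [expand]
    have hadd : Integrable (fun z : Idx ℓ → ℂ => q1 z + q2 z) :=
      (integrable_mix θ g).add (integrable_mix θ' g)
    have hmul : Integrable (fun z : Idx ℓ → ℂ => 2 * Real.sqrt (q1 z * q2 z)) :=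
      sqrt_int.const_mul 2
    rw [integral_sub hadd hmul]
    rw [integral_add (integrable_mix θ g) (integrable_mix θ' g)]
    rw [hq1, hq2, integral_mix θ g, integral_mix θ' g, MeasureTheory.integral_const_mul]
    norm_num
  have S_nonneg : 0 ≤ ∫ z, (Real.sqrt (q1 z) - Real.sqrt (q2 z)) ^ 2 :=
    integral_nonneg fun z => sq_nonneg _
  have hsqrt2 : (1 : ℝ) ≤ Real.sqrt 2 := by
    nlinarith [Real.sq_sqrt (by norm_num : (0:ℝ) ≤ 2), Real.sqrt_nonneg 2]
  have S_le : ∫ z, (Real.sqrt (q1 z) - Real.sqrt (q2 z)) ^ 2 ≤ Real.sqrt 2 * D := by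
    rw [int_S]
    have hE_nonneg : 0 ≤ E := le_of_lt (Real.exp_pos _)
    rcases le_or_gt D 2 with hDle | hDgt
    · have h1 : 1 - D2 / 4 ≤ E := by
        have := Real.add_one_le_exp (-D2 / 4)
        rw [hE]; linarith
      have h2 : 2 - 2 * ∫ z, Real.sqrt (q1 z * q2 z) ≤ 2 - 2 * E := by linarith
      have h3 : 2 - 2 * E ≤ D2 / 2 := by linarith
      have h4 : D2 / 2 ≤ Real.sqrt 2 * D := by
        rw [← hDsq]
        nlinarith
      linarith
    · have : 2 - 2 * ∫ z, Real.sqrt (q1 z * q2 z) ≤ 2 := by linarith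
      have : (2 : ℝ) ≤ Real.sqrt 2 * D := by nlinarith
      linarith
  -- conclusion
  have hDthm : thetaNorm ℓ (fun k => θ k - θ' k) = D := rfl
  rw [dHd, hDthm]
  calc Real.sqrt (∫ z, (Real.sqrt (q1 z) - Real.sqrt (q2 z)) ^ 2)
      ≤ Real.sqrt (Real.sqrt 2 * D) := Real.sqrt_le_sqrt S_le
    _ = Real.sqrt (Real.sqrt 2) * Real.sqrt D := Real.sqrt_mul (Real.sqrt_nonneg 2) D
    _ = (2 : ℝ) ^ ((1 : ℝ) / 4) * Real.sqrt D := by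
        congr 1
        rw [Real.sqrt_eq_rpow, Real.sqrt_eq_rpow,
          ← Real.rpow_mul (by norm_num : (0:ℝ) ≤ 2)]
        norm_num

end
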